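/- Let B be a finite nonempty set, T = [t0,t1] ⊂ ℝ with t0 < t1, and φ : B × T → ℝ; for a probability vector a on B set φ(a,t) := Σ_{b∈B} a_b φ(b,t). Suppose: (i) for all probability vectors a, a' on B, the function t ↦ φ(a,t) − φ(a',t) is single-crossing on T (its sign is monotone in t); and (ii) there exist probability vectors a0, a0' on B and a constant c ≠ 0 with φ(a0,t) − φ(a0',t) = c for all t ∈ T. Then for all probability vectors a, a' on B, the function t ↦ φ(a,t) − φ(a',t) is monotone (nondecreasing or nonincreasing) on T. -/

import Mathlib

namespace Stmt15

variable {B : Type*} [Fintype B]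

/-- A probability vector on the finite set B. -/
def IsStoch (a : B → ℝ) : Prop := (∀ b, 0 ≤ a b) ∧ ∑ b, a b = 1

/-- Linear extension of φ to probability vectors. -/
def phiA (φ : B → ℝ → ℝ) (a : B → ℝ) (t : ℝ) : ℝ := ∑ b, a b * φ b t

/-- A function is single-crossing on a set: its sign is monotone there. -/
def SingleCrossingOn (g : ℝ → ℝ) (T : Set ℝ) : Prop :=
  MonotoneOn (fun t => Real.sign (g t)) T ∨ AntitoneOn (fun t => Real.sign (g t)) T

lemma sign_mul_pos {l : ℝ} (hl : 0 < l) (x : ℝ) : Real.sign (l * x) = Real.sign x := by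
  rcases lt_trichotomy x 0 with h | h | h
  · rw [Real.sign_of_neg h, Real.sign_of_neg (mul_neg_of_pos_of_neg hl h)]
  · simp [h]
  · rw [Real.sign_of_pos h, Real.sign_of_pos (mul_pos hl h)]

lemma scOn_congr {f f' : ℝ → ℝ} {T : Set ℝ}
    (h : ∀ t ∈ T, Real.sign (f t) = Real.sign (f' t)) :
    SingleCrossingOn f T → SingleCrossingOn f' T := by
  rintro (hm | hm)
  · exact Or.inl fun x hx y hy hxy => by
      have := hm hx hy hxy
      simpa only [h x hx, h y hy] using this
  · exact Or.inr fun x hx y hy hxy => by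
      have := hm hx hy hxy
      simpa only [h x hx, h y hy] using this

lemma stoch_mix {a a0 : B → ℝ} (ha : IsStoch a) (h0 : IsStoch a0) {l : ℝ}
    (hl0 : 0 ≤ l) (hl1 : l ≤ 1) : IsStoch (fun b => l * a b + (1 - l) * a0 b) := by
  constructor
  · intro b
    have := ha.1 b; have := h0.1 b
    have : 0 ≤ 1 - l := by linarith
    positivity
  · rw [Finset.sum_add_distrib, ← Finset.mul_sum, ← Finset.mul_sum, ha.2, h0.2]; ring

lemma phiA_mix (φ : B → ℝ → ℝ) (a a0 : B → ℝ) (l t : ℝ) :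
    phiA φ (fun b => l * a b + (1 - l) * a0 b) t
      = l * phiA φ a t + (1 - l) * phiA φ a0 t := by
  simp only [phiA, Finset.mul_sum, ← Finset.sum_add_distrib]
  exact Finset.sum_congr rfl fun b _ => by ring

/-- **Proposition.** If differences of φ-values of probability vectors are single
crossing on T, and some pair of probability vectors has constant nonzero difference
on T, then differences of φ-values of probability vectors are monotone on T. -/
theorem stmt15 [Nonempty B] (t0 t1 : ℝ) (ht : t0 < t1) (φ : B → ℝ → ℝ)
    (hscd : ∀ a a' : B → ℝ, IsStoch a → IsStoch a' →
      SingleCrossingOn (fun t => phiA φ a t - phiA φ a' t) (Set.Icc t0 t1))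
    (hconst : ∃ (a0 a0' : B → ℝ) (c : ℝ), IsStoch a0 ∧ IsStoch a0' ∧ c ≠ 0 ∧
      ∀ t ∈ Set.Icc t0 t1, phiA φ a0 t - phiA φ a0' t = c) :
    ∀ a a' : B → ℝ, IsStoch a → IsStoch a' →
      MonotoneOn (fun t => phiA φ a t - phiA φ a' t) (Set.Icc t0 t1) ∨
      AntitoneOn (fun t => phiA φ a t - phiA φ a' t) (Set.Icc t0 t1) := by
  obtain ⟨a0, a0', c, h0, h0', hc, hcst⟩ := hconst
  intro a a' ha ha'
  set T := Set.Icc t0 t1 with hT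
  set g : ℝ → ℝ := fun t => phiA φ a t - phiA φ a' t with hg
  clear_value g
  -- key: for every real μ, g + μ is single-crossing on T
  have key : ∀ μ : ℝ, SingleCrossingOn (fun t => g t + μ) T := by
    intro μ
    -- realize μ as ν * c with ν of arbitrary sign
    set ν : ℝ := μ / c with hν
    have hμ : μ = ν * c := by rw [hν, div_mul_cancel₀ μ hc]
    rcases le_or_gt 0 ν with hν0 | hν0
    · -- mix a with a0, a' with a0'
      set l : ℝ := 1 / (1 + ν) with hl
      have h1ν : 0 < 1 + ν := by linarith
      have hl0 : 0 < l := by positivity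
      have hl1 : l ≤ 1 := by rw [hl]; rw [div_le_one h1ν]; linarith
      have hsc := hscd (fun b => l * a b + (1 - l) * a0 b)
        (fun b => l * a' b + (1 - l) * a0' b)
        (stoch_mix ha h0 hl0.le hl1) (stoch_mix ha' h0' hl0.le hl1)
      refine scOn_congr (fun t htT => ?_) hsc
      have h1l : 1 - l = l * ν := by
        rw [hl]; field_simp; ring
      rw [phiA_mix, phiA_mix]
      have : l * phiA φ a t + (1 - l) * phiA φ a0 t -
          (l * phiA φ a' t + (1 - l) * phiA φ a0' t)
          = l * (g t + ν * (phiA φ a0 t - phiA φ a0' t)) := by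
        rw [h1l, hg]; ring
      rw [this, sign_mul_pos hl0, hcst t htT, hμ]
    · -- mix a with a0', a' with a0
      set l : ℝ := 1 / (1 - ν) with hl
      have h1ν : 0 < 1 - ν := by linarith
      have hl0 : 0 < l := by positivity
      have hl1 : l ≤ 1 := by rw [hl]; rw [div_le_one h1ν]; linarith
      have hsc := hscd (fun b => l * a b + (1 - l) * a0' b)
        (fun b => l * a' b + (1 - l) * a0 b)
        (stoch_mix ha h0' hl0.le hl1) (stoch_mix ha' h0 hl0.le hl1)
      refine scOn_congr (fun t htT => ?_) hsc
      have h1l : 1 - l = l * (-ν) := by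
        rw [hl]; field_simp; ring
      rw [phiA_mix, phiA_mix]
      have : l * phiA φ a t + (1 - l) * phiA φ a0' t -
          (l * phiA φ a' t + (1 - l) * phiA φ a0 t)
          = l * (g t + ν * (phiA φ a0 t - phiA φ a0' t)) := by
        rw [h1l, hg]; ring
      rw [this, sign_mul_pos hl0, hcst t htT, hμ]
  -- now conclude by contradiction
  by_contra hcon
  push_neg at hcon
  obtain ⟨x, hx, y, hy, z, hz, hxy, hyz, hcase⟩ :=
    (Set.not_monotoneOn_not_antitoneOn_iff_exists_lt_lt).1 hcon
  rcases hcase with ⟨h1, h2⟩ | ⟨h1, h2⟩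
  · -- peak: g x < g y, g z < g y
    obtain ⟨μ, hμy, hμx, hμz⟩ : ∃ μ : ℝ, -g y < μ ∧ μ < -g x ∧ μ < -g z := by
      refine ⟨(-g y + min (-g x) (-g z)) / 2, ?_, ?_, ?_⟩
      · have : -g y < min (-g x) (-g z) := lt_min (by linarith) (by linarith)
        linarith
      · have h3 := min_le_left (-g x) (-g z)
        linarith
      · have h3 := min_le_right (-g x) (-g z)
        linarith
    have hsx : Real.sign (g x + μ) = -1 := Real.sign_of_neg (by linarith)
    have hsy : Real.sign (g y + μ) = 1 := Real.sign_of_pos (by linarith)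
    have hsz : Real.sign (g z + μ) = -1 := Real.sign_of_neg (by linarith)
    rcases key μ with hm | hm
    · have := hm hy hz hyz.le
      simp only [hsy, hsz] at this; linarith
    · have := hm hx hy hxy.le
      simp only [hsx, hsy] at this; linarith
  · -- valley: g y < g x, g y < g z
    obtain ⟨μ, hμy, hμx, hμz⟩ : ∃ μ : ℝ, μ < -g y ∧ -g x < μ ∧ -g z < μ := by
      refine ⟨(max (-g x) (-g z) + -g y) / 2, ?_, ?_, ?_⟩
      · have : max (-g x) (-g z) < -g y := max_lt (by linarith) (by linarith)
        linarith
      · have h3 := le_max_left (-g x) (-g z)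
        linarith
      · have h3 := le_max_right (-g x) (-g z)
        linarith
    have hsx : Real.sign (g x + μ) = 1 := Real.sign_of_pos (by linarith)
    have hsy : Real.sign (g y + μ) = -1 := Real.sign_of_neg (by linarith)
    have hsz : Real.sign (g z + μ) = 1 := Real.sign_of_pos (by linarith)
    rcases key μ with hm | hm
    · have := hm hx hy hxy.le
      simp only [hsx, hsy] at this; linarith
    · have := hm hy hz hyz.le
      simp only [hsy, hsz] at this; linarith

end Stmt15
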